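/- Maximum probability of conversion under the SU(2)-SSR on ℋ_n̂: Let p, q : ℕ → ℝ be standard-form weight distributions on ℋ_n̂, and suppose there is a unique J₀ ∈ ℕ such that for all j ∈ ℕ, q j ≠ 0 implies p (j + J₀) ≠ 0. Then the set of achievable conversion probabilities { λ : ℝ | there exist downward shifts J : ℕ → ℕ, nonnegative coefficients c : ℕ → ℕ → ℝ with c μ j = 0 whenever j < J μ and ∑' μ, (c μ j)² ≤ 1 for every j ∈ ℕ, and nonnegative weights w : ℕ → ℝ such that (c μ (j + J μ))² · p (j + J μ) = w μ · q j for all μ and j, and λ = ∑' μ, w μ } has a greatest element, equal to the minimum of p (j + J₀) / q j over the (finitely many, and at least one) j with q j ≠ 0. -/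

import Mathlib

/-- **Maximum probability of conversion under the SU(2)-SSR on ℋ_n̂.**
If there is a unique downward shift `J₀` such that the j-spectrum of `q` lies inside
the j-spectrum of `p` shifted down by `J₀`, then the set of achievable conversion
probabilities (via trace-nonincreasing SU(2)-invariant Kraus families) has a greatest
element, equal to the minimum of `p (j + J₀) / q j` over the `j` with `q j ≠ 0`. -/
theorem su2_max_probability
    (p q : ℕ → ℝ)
    (hp0 : ∀ j, 0 ≤ p j) (hpfin : (Function.support p).Finite) (hpsum : ∑' j, p j = 1)
    (hq0 : ∀ j, 0 ≤ q j) (hqfin : (Function.support q).Finite) (hqsum : ∑' j, q j = 1)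
    (J₀ : ℕ) (hJ₀ : ∀ j, q j ≠ 0 → p (j + J₀) ≠ 0)
    (huniq : ∀ J : ℕ, (∀ j, q j ≠ 0 → p (j + J) ≠ 0) → J = J₀) :
    ∃ m : ℝ,
      IsLeast {r : ℝ | ∃ j : ℕ, q j ≠ 0 ∧ r = p (j + J₀) / q j} m ∧
      IsGreatest {lam : ℝ | ∃ (J : ℕ → ℕ) (c : ℕ → ℕ → ℝ) (w : ℕ → ℝ),
        (∀ μ j, 0 ≤ c μ j) ∧ (∀ μ j, j < J μ → c μ j = 0) ∧
        (∀ j, ∑' μ, (c μ j) ^ 2 ≤ 1) ∧ (∀ μ, 0 ≤ w μ) ∧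
        (∀ μ j, (c μ (j + J μ)) ^ 2 * p (j + J μ) = w μ * q j) ∧
        lam = ∑' μ, w μ} m := by
  have hqne : (Function.support q).Nonempty := by
    by_contra h
    rw [Set.not_nonempty_iff_eq_empty, Function.support_eq_empty_iff] at h
    simp [h] at hqsum
  obtain ⟨j₀, hj₀mem, hj₀min⟩ := Set.exists_min_image (Function.support q)
    (fun j => p (j + J₀) / q j) hqfin hqne
  set m := p (j₀ + J₀) / q j₀ with hm
  have hqj₀ : q j₀ ≠ 0 := hj₀mem
  have hpj₀ : p (j₀ + J₀) ≠ 0 := hJ₀ j₀ hqj₀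
  have hqj₀' : 0 < q j₀ := (hq0 j₀).lt_of_ne (Ne.symm hqj₀)
  have hm0 : 0 ≤ m := div_nonneg (hp0 _) (hq0 _)
  refine ⟨m, ⟨⟨j₀, hqj₀, rfl⟩, ?_⟩, ?_, ?_⟩
  · rintro r ⟨j, hqj, rfl⟩
    exact hj₀min j hqj
  · -- membership: construct explicit Kraus family
    refine ⟨fun _ => J₀,
      fun μ j => if μ = 0 then (if j < J₀ then 0 else Real.sqrt (m * q (j - J₀) / p j)) else 0,
      fun μ => if μ = 0 then m else 0, ?_, ?_, ?_, ?_, ?_, ?_⟩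
    · intro μ j
      dsimp only
      split_ifs <;> simp [Real.sqrt_nonneg]
    · intro μ j h
      by_cases hμ : μ = 0 <;> simp [hμ, h]
    · intro j
      have hts : ∑' μ, ((if μ = 0 then (if j < J₀ then 0 else Real.sqrt (m * q (j - J₀) / p j)) else 0) ^ 2 : ℝ)
          = (if j < J₀ then 0 else Real.sqrt (m * q (j - J₀) / p j)) ^ 2 := by
        refine tsum_eq_single 0 (fun μ hμ => by simp [hμ])
      rw [hts]
      split_ifs with hj
      · norm_num
      · rw [Real.sq_sqrt (div_nonneg (mul_nonneg hm0 (hq0 _)) (hp0 _))]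
        by_cases hpj : p j = 0
        · simp [hpj]
        · by_cases hqj : q (j - J₀) = 0
          · simp [hqj]
          · have hle := hj₀min (j - J₀) hqj
            rw [Nat.sub_add_cancel (Nat.not_lt.mp hj)] at hle
            have hpj' : 0 < p j := (hp0 j).lt_of_ne (Ne.symm hpj)
            have hqj' : 0 < q (j - J₀) := (hq0 _).lt_of_ne (Ne.symm hqj)
            rw [div_le_one hpj']
            calc m * q (j - J₀) ≤ (p j / q (j - J₀)) * q (j - J₀) :=
                  mul_le_mul_of_nonneg_right hle (hq0 _)
              _ = p j := div_mul_cancel₀ _ hqj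
    · intro μ
      dsimp only
      split_ifs <;> simp [hm0]
    · intro μ j
      dsimp only
      by_cases hμ : μ = 0
      · rw [if_pos hμ, if_pos hμ]
        have hlt : ¬ (j + J₀ < J₀) := by omega
        rw [if_neg hlt, Nat.add_sub_cancel,
          Real.sq_sqrt (div_nonneg (mul_nonneg hm0 (hq0 _)) (hp0 _))]
        by_cases hp : p (j + J₀) = 0
        · have hq : q j = 0 := by
            by_contra hq
            exact hJ₀ j hq hp
          simp [hp, hq]
        · rw [div_mul_cancel₀ _ hp]
      · simp [hμ]
    · exact (tsum_ite_eq 0 (fun _ => m)).symm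
  · -- upper bound
    rintro lam ⟨J, c, w, hc0, hcJ, hcsum, hw0, heq, rfl⟩
    have key : ∀ μ, w μ = m * (c μ (j₀ + J₀)) ^ 2 := by
      intro μ
      by_cases hw : w μ = 0
      · have hc : c μ (j₀ + J₀) = 0 := by
          rcases lt_or_ge (j₀ + J₀) (J μ) with h | h
          · exact hcJ μ _ h
          · have h2 := heq μ (j₀ + J₀ - J μ)
            rw [Nat.sub_add_cancel h, hw, zero_mul] at h2
            rcases mul_eq_zero.mp h2 with h3 | h3
            · exact pow_eq_zero_iff two_ne_zero |>.mp h3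
            · exact absurd h3 hpj₀
        rw [hw, hc]; ring
      · have hJμ : J μ = J₀ := by
          apply huniq
          intro j hqj hp
          have h2 := heq μ j
          rw [hp, mul_zero] at h2
          rcases mul_eq_zero.mp h2.symm with h3 | h3
          · exact hw h3
          · exact hqj h3
        have h2 := heq μ j₀
        rw [hJμ] at h2
        rw [hm]
        field_simp
        linarith [h2]
    calc ∑' μ, w μ = ∑' μ, m * (c μ (j₀ + J₀)) ^ 2 := tsum_congr key
      _ = m * ∑' μ, (c μ (j₀ + J₀)) ^ 2 := tsum_mul_left
      _ ≤ m * 1 := mul_le_mul_of_nonneg_left (hcsum _) hm0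
      _ = m := mul_one m
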